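/- Let H be a finite-dimensional real inner product space, F : H → ℝ continuously differentiable with ∇F Lipschitz with constant L > 0 on a set M ⊆ H, G : H → ℝ convex and continuously differentiable, E = F + G, and let ᾱ > 0. Suppose Φ_{k−1}, Φ_k ∈ H, w ∈ [0,1], Φ̃ = Φ_k + w(Φ_k − Φ_{k−1}), α ≥ ᾱ, and Φ_{k+1} is a minimizer over Φ of G(Φ) + ⟨∇F(Φ̃), Φ − Φ̃⟩ + (1/(2α))‖Φ − Φ̃‖². If Φ̃, Φ_{k+1} ∈ M, then ‖∇E(Φ_{k+1})‖ ≤ (L + 1/ᾱ)(‖Φ_{k+1} − Φ_k‖ + w‖Φ_k − Φ_{k−1}‖). -/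

import Mathlib

open RealInnerProductSpace

/-- Bound on the gradient of the energy at the new iterate of the
(extrapolated) proximal gradient step: with `Φ̃ = Φ_k + w (Φ_k - Φ_{k-1})`,
step size `α ≥ ᾱ > 0`, and `∇F` being `L`-Lipschitz on the set `M` containing
`Φ̃` and `Φ_{k+1}`, one has
`‖∇E(Φ_{k+1})‖ ≤ (L + 1/ᾱ)(‖Φ_{k+1} - Φ_k‖ + w ‖Φ_k - Φ_{k-1}‖)`. -/
theorem prox_step_gradient_bound
    {H : Type*} [NormedAddCommGroup H] [InnerProductSpace ℝ H]
    [FiniteDimensional ℝ H]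
    (F G : H → ℝ) (hF : ContDiff ℝ 1 F) (hG : ContDiff ℝ 1 G)
    (hG_convex : ConvexOn ℝ Set.univ G)
    (L : ℝ) (hL : 0 < L) (M : Set H)
    (hF_lip : ∀ x ∈ M, ∀ y ∈ M, ‖gradient F x - gradient F y‖ ≤ L * ‖x - y‖)
    (E : H → ℝ) (hE : E = fun x => F x + G x)
    (ᾱ α : ℝ) (hᾱ : 0 < ᾱ) (hαᾱ : ᾱ ≤ α)
    (Φkm Φk Φp Φt : H) (w : ℝ) (hw : w ∈ Set.Icc (0 : ℝ) 1)
    (hΦt : Φt = Φk + w • (Φk - Φkm))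
    (hmin : ∀ Φ : H,
      G Φp + ⟪gradient F Φt, Φp - Φt⟫ + (1 / (2 * α)) * ‖Φp - Φt‖ ^ 2
        ≤ G Φ + ⟪gradient F Φt, Φ - Φt⟫ + (1 / (2 * α)) * ‖Φ - Φt‖ ^ 2)
    (hmemt : Φt ∈ M) (hmemp : Φp ∈ M) :
    ‖gradient E Φp‖ ≤ (L + 1 / ᾱ) * (‖Φp - Φk‖ + w * ‖Φk - Φkm‖) := by
  have hα : 0 < α := lt_of_lt_of_le hᾱ hαᾱ
  set v := gradient F Φt with hv
  set c : ℝ := 1 / (2 * α) with hc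
  -- the prox objective
  set h : H → ℝ := fun Φ => G Φ + ⟪v, Φ - Φt⟫ + c * ⟪Φ - Φt, Φ - Φt⟫ with hh
  -- differentiability pieces
  have hGdiff : DifferentiableAt ℝ G Φp := (hG.differentiable one_ne_zero) Φp
  have hGfd : HasFDerivAt G (InnerProductSpace.toDual ℝ H (gradient G Φp)) Φp :=
    hGdiff.hasGradientAt.hasFDerivAt
  have hsub : HasFDerivAt (fun Φ : H => Φ - Φt) (ContinuousLinearMap.id ℝ H) Φp :=
    (hasFDerivAt_id Φp).sub_const Φt
  have hconst : HasFDerivAt (fun _ : H => v) (0 : H →L[ℝ] H) Φp := hasFDerivAt_const v Φp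
  have hinner1 := (hconst.inner ℝ hsub)
  have hinner2 := (hsub.inner ℝ hsub)
  have hfd : HasFDerivAt h
      ((InnerProductSpace.toDual ℝ H (gradient G Φp)
        + (fderivInnerCLM ℝ ((fun _ : H => v) Φp, Φp - Φt)).comp
            ((0 : H →L[ℝ] H).prod (ContinuousLinearMap.id ℝ H)))
        + c • ((fderivInnerCLM ℝ (Φp - Φt, Φp - Φt)).comp
            ((ContinuousLinearMap.id ℝ H).prod (ContinuousLinearMap.id ℝ H)))) Φp :=
    (hGfd.add hinner1).add (hinner2.const_mul c)
  -- Φp is a local minimum of h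
  have hloc : IsLocalMin h Φp := by
    apply Filter.Eventually.of_forall
    intro Φ
    have := hmin Φ
    simpa [hh, real_inner_self_eq_norm_sq] using this
  have hD0 := hloc.hasFDerivAt_eq_zero hfd
  -- first-order condition: ∇G Φp + v + (2c) • (Φp - Φt) = 0
  have hfo : gradient G Φp + v + (2 * c) • (Φp - Φt) = 0 := by
    have key : ∀ u : H, ⟪gradient G Φp + v + (2 * c) • (Φp - Φt), u⟫ = 0 := by
      intro u
      have := congrArg (fun D : H →L[ℝ] ℝ => D u) hD0
      simp only [ContinuousLinearMap.add_apply, ContinuousLinearMap.smul_apply,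
        ContinuousLinearMap.comp_apply, ContinuousLinearMap.prod_apply,
        ContinuousLinearMap.zero_apply, ContinuousLinearMap.id_apply,
        fderivInnerCLM_apply, InnerProductSpace.toDual_apply_apply,
        ContinuousLinearMap.zero_apply] at this
      have hsymm : ⟪u, Φp - Φt⟫ = ⟪Φp - Φt, u⟫ := real_inner_comm _ _
      rw [inner_add_left, inner_add_left, real_inner_smul_left]
      rw [hsymm] at this
      simp only [smul_eq_mul, inner_zero_left, inner_zero_right] at this
      linarith [this]
    have := key (gradient G Φp + v + (2 * c) • (Φp - Φt))
    rwa [inner_self_eq_zero] at this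
  -- gradient of E
  have hFdiff : DifferentiableAt ℝ F Φp := (hF.differentiable one_ne_zero) Φp
  have hEgrad : gradient E Φp = gradient F Φp + gradient G Φp := by
    have : HasGradientAt E (gradient F Φp + gradient G Φp) Φp := by
      rw [hasGradientAt_iff_hasFDerivAt, map_add, hE]
      exact hFdiff.hasGradientAt.hasFDerivAt.add hGdiff.hasGradientAt.hasFDerivAt
    exact this.gradient
  have h2c : 2 * c = 1 / α := by
    rw [hc]; field_simp
  -- express ∇E Φp
  have hEexpr : gradient E Φp = (gradient F Φp - gradient F Φt) - (1 / α) • (Φp - Φt) := by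
    rw [hEgrad]
    have : gradient G Φp = -v - (2 * c) • (Φp - Φt) := by
      have := hfo
      abel_nf at this ⊢
      linear_combination (norm := abel) this
    rw [this, h2c, hv]
    abel
  -- norm bound at Φt
  have hd1 : ‖gradient E Φp‖ ≤ (L + 1 / ᾱ) * ‖Φp - Φt‖ := by
    rw [hEexpr]
    calc ‖(gradient F Φp - gradient F Φt) - (1 / α) • (Φp - Φt)‖
        ≤ ‖gradient F Φp - gradient F Φt‖ + ‖(1 / α) • (Φp - Φt)‖ := norm_sub_le _ _
      _ ≤ L * ‖Φp - Φt‖ + (1 / α) * ‖Φp - Φt‖ := by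
          gcongr
          · exact hF_lip Φp hmemp Φt hmemt
          · rw [norm_smul, Real.norm_eq_abs, abs_of_pos (by positivity)]
      _ ≤ L * ‖Φp - Φt‖ + (1 / ᾱ) * ‖Φp - Φt‖ := by
          gcongr
      _ = (L + 1 / ᾱ) * ‖Φp - Φt‖ := by ring
  -- triangle inequality for Φp - Φt
  have hd2 : ‖Φp - Φt‖ ≤ ‖Φp - Φk‖ + w * ‖Φk - Φkm‖ := by
    have : Φp - Φt = (Φp - Φk) - w • (Φk - Φkm) := by rw [hΦt]; abel
    rw [this]
    calc ‖(Φp - Φk) - w • (Φk - Φkm)‖ ≤ ‖Φp - Φk‖ + ‖w • (Φk - Φkm)‖ := norm_sub_le _ _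
      _ = ‖Φp - Φk‖ + w * ‖Φk - Φkm‖ := by
          simp [norm_smul, abs_of_nonneg hw.1]
  calc ‖gradient E Φp‖ ≤ (L + 1 / ᾱ) * ‖Φp - Φt‖ := hd1
    _ ≤ (L + 1 / ᾱ) * (‖Φp - Φk‖ + w * ‖Φk - Φkm‖) := by
        gcongr
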